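/- Let V be a finite-dimensional complex inner product space, a : V × V → ℂ a bounded bilinear form, b : V → ℂ and Q : V → ℂ linear forms. Assume there is β^d > 0 such that β^d‖x‖ ≤ sup over nonzero w ∈ V of |a(w,x)|/‖w‖ for all x ∈ V, and let β̃^d satisfy 0 < β̃^d ≤ β^d. Let u ∈ V satisfy a(u,w) = b(w) for all w ∈ V, let v ∈ V satisfy a(w,v) = Q(w) for all w ∈ V, and let û, v̂ ∈ V be arbitrary. Let g ∈ V be the Riesz representative of the primal residual (⟪g, w⟫ = a(û,w) − b(w) for all w) and g^d ∈ V the Riesz representative of the dual residual (⟪g^d, w⟫ = a(w,v̂) − Q(w) for all w). Then |Q(u) − ( Q(û) − ⟪g, v̂⟫ )| ≤ (β̃^d)⁻¹ ‖g‖ ‖g^d‖. -/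

import Mathlib

/-- Goal-oriented a posteriori error bound: under adjoint inf-sup stability
with constant `βd ≥ βtd > 0`, the error in the dual-corrected output is
bounded by `(βtd)⁻¹ ‖g‖ ‖gd‖`, where `g` and `gd` are the Riesz
representatives of the primal and dual residuals. -/
theorem stmt3 {V : Type*} [NormedAddCommGroup V] [InnerProductSpace ℂ V]
    [FiniteDimensional ℂ V]
    (a : V →ₗ[ℂ] V →ₗ[ℂ] ℂ) (b Q : V →ₗ[ℂ] ℂ)
    (C : ℝ) (hbound : ∀ u v : V, ‖a u v‖ ≤ C * ‖u‖ * ‖v‖)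
    (βd : ℝ) (hβd : 0 < βd)
    (hinfsup : ∀ x : V, βd * ‖x‖ ≤ ⨆ w : {w : V // w ≠ 0}, ‖a (w : V) x‖ / ‖(w : V)‖)
    (βtd : ℝ) (hβtdpos : 0 < βtd) (hβtdle : βtd ≤ βd)
    (u : V) (hu : ∀ w : V, a u w = b w)
    (v : V) (hv : ∀ w : V, a w v = Q w)
    (uhat vhat : V)
    (g : V) (hg : ∀ w : V, (inner ℂ g w : ℂ) = a uhat w - b w)
    (gd : V) (hgd : ∀ w : V, (inner ℂ gd w : ℂ) = a w vhat - Q w) :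
    ‖Q u - (Q uhat - (inner ℂ g vhat : ℂ))‖ ≤ βtd⁻¹ * ‖g‖ * ‖gd‖ := by
  have hgv : (inner ℂ g v : ℂ) = Q uhat - Q u := by
    rw [hg v, hv uhat, ← hu v, hv u]
  have key : Q u - (Q uhat - (inner ℂ g vhat : ℂ)) = inner ℂ g (vhat - v) := by
    rw [inner_sub_right, hgv]; ring
  have hsup : (⨆ w : {w : V // w ≠ 0}, ‖a (w : V) (vhat - v)‖ / ‖(w : V)‖) ≤ ‖gd‖ := by
    apply Real.iSup_le _ (norm_nonneg _)
    rintro ⟨w, hw⟩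
    have hval : a w (vhat - v) = inner ℂ gd w := by
      rw [map_sub, hgd w, hv w]
    rw [hval, div_le_iff₀ (norm_pos_iff.mpr hw)]
    exact norm_inner_le_norm gd w
  have hvv : ‖vhat - v‖ ≤ βtd⁻¹ * ‖gd‖ := by
    rw [inv_mul_eq_div, le_div_iff₀ hβtdpos, mul_comm]
    calc βtd * ‖vhat - v‖ ≤ βd * ‖vhat - v‖ := by
          exact mul_le_mul_of_nonneg_right hβtdle (norm_nonneg _)
      _ ≤ _ := (hinfsup _).trans hsup
  calc ‖Q u - (Q uhat - (inner ℂ g vhat : ℂ))‖ = ‖(inner ℂ g (vhat - v) : ℂ)‖ := by rw [key]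
    _ ≤ ‖g‖ * ‖vhat - v‖ := norm_inner_le_norm g _
    _ ≤ ‖g‖ * (βtd⁻¹ * ‖gd‖) := by
        exact mul_le_mul_of_nonneg_left hvv (norm_nonneg g)
    _ = βtd⁻¹ * ‖g‖ * ‖gd‖ := by ring
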